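/- Let b ∈ ℝ^(d|I_obs|), ε₀ ∈ (0,1), and θ = 2/(λ_min(Σ_obs) + λ_max(Σ_obs)). Let ξ₀^(0), ξ₀^(1), … be vectors with ‖ξ₀^(j)‖₂ ≤ ε₀ for all j, and define the perturbed gradient-descent iterates u^(0) = 0 and u^(j+1) = u^(j) − θ(Σ_obs u^(j) − b) + ξ₀^(j). Then for every nonnegative integer K with K ≥ ((κ(Σ_obs)+1)/2)·log(‖b‖₂/(λ_min(Γ_obs)·λ_min(Λ)·ε₀)), one has ‖u^(K) − Σ_obs^(−1) b‖₂ ≤ ((κ(Σ_obs)+3)/2)·ε₀. -/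

import Mathlib

open Matrix
open scoped Kronecker BigOperators

noncomputable section

/-- Euclidean norm of a finitely-indexed real vector. -/
def norm2 {ι : Type*} [Fintype ι] (v : ι → ℝ) : ℝ := Real.sqrt (∑ i, v i ^ 2)

/-- Largest eigenvalue of a real matrix, expressed as the supremum of the Rayleigh
quotient over the Euclidean unit sphere. -/
def lamMax {ι : Type*} [Fintype ι] (A : Matrix ι ι ℝ) : ℝ :=
  ⨆ v : {v : ι → ℝ // ∑ i, v i ^ 2 = 1}, v.1 ⬝ᵥ (A *ᵥ v.1)

/-- Smallest eigenvalue of a real matrix, expressed as the infimum of the Rayleigh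
quotient over the Euclidean unit sphere. -/
def lamMin {ι : Type*} [Fintype ι] (A : Matrix ι ι ℝ) : ℝ :=
  ⨅ v : {v : ι → ℝ // ∑ i, v i ^ 2 = 1}, v.1 ⬝ᵥ (A *ᵥ v.1)

/-- Condition number of a matrix. -/
def kappa {ι : Type*} [Fintype ι] (A : Matrix ι ι ℝ) : ℝ := lamMax A / lamMin A

set_option linter.unusedSectionVars false

namespace GD
variable {ι : Type*} [Fintype ι] [DecidableEq ι]

def eV (v : ι → ℝ) : EuclideanSpace ℝ ι := (WithLp.equiv 2 (ι → ℝ)).symm v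
lemma eV_coe (v : ι → ℝ) : (WithLp.equiv 2 (ι → ℝ)) (eV v) = v := rfl
lemma eV_sub (x y : ι → ℝ) : eV (x - y) = eV x - eV y := rfl
lemma eV_smul (c : ℝ) (x : ι → ℝ) : eV (c • x) = c • eV x := rfl
lemma eV_neg (x : ι → ℝ) : eV (-x) = - eV x := rfl
lemma norm2_eq (v : ι → ℝ) : norm2 v = ‖eV v‖ := by
  rw [EuclideanSpace.norm_eq, norm2]
  congr 1
  refine Finset.sum_congr rfl fun i _ => ?_
  rw [show (eV v) i = v i from rfl, Real.norm_eq_abs, sq_abs]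
lemma norm2_nonneg (v : ι → ℝ) : 0 ≤ norm2 v := Real.sqrt_nonneg _
lemma norm2_sq (v : ι → ℝ) : norm2 v ^ 2 = ∑ i, v i ^ 2 :=
  Real.sq_sqrt (Finset.sum_nonneg fun i _ => sq_nonneg _)
lemma innerE (x y : EuclideanSpace ℝ ι) : (inner ℝ x y : ℝ) = ∑ i, x i * y i := by
  rw [PiLp.inner_apply]; simp [RCLike.inner_apply, mul_comm]
lemma inner_eV (x y : ι → ℝ) : (inner ℝ (eV x) (eV y) : ℝ) = x ⬝ᵥ y := by
  rw [innerE]; rfl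

section spectral
variable {A : Matrix ι ι ℝ}

lemma dot_mulVec_symm (hA : A.IsHermitian) (x y : ι → ℝ) : x ⬝ᵥ (A *ᵥ y) = (A *ᵥ x) ⬝ᵥ y := by
  rw [dotProduct_mulVec, ← mulVec_transpose,
    ← conjTranspose_eq_transpose_of_trivial, show Aᴴ = A from hA, dotProduct_comm]

/-- eigenvector as a plain vector -/
def evec (hA : A.IsHermitian) (i : ι) : ι → ℝ :=
  (WithLp.equiv 2 (ι → ℝ)) (hA.eigenvectorBasis i)

lemma eV_evec (hA : A.IsHermitian) (i : ι) : eV (evec hA i) = hA.eigenvectorBasis i := rfl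

lemma repr_mulVec (hA : A.IsHermitian) (v : ι → ℝ) (i : ι) :
    hA.eigenvectorBasis.repr (eV (A *ᵥ v)) i
      = hA.eigenvalues i * hA.eigenvectorBasis.repr (eV v) i := by
  rw [OrthonormalBasis.repr_apply_apply, OrthonormalBasis.repr_apply_apply]
  have h1 : (inner ℝ (hA.eigenvectorBasis i) (eV (A *ᵥ v)) : ℝ)
      = evec hA i ⬝ᵥ (A *ᵥ v) := by
    rw [← eV_evec hA i, inner_eV]
  have h2 : (inner ℝ (hA.eigenvectorBasis i) (eV v) : ℝ) = evec hA i ⬝ᵥ v := by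
    rw [← eV_evec hA i, inner_eV]
  rw [h1, h2, dot_mulVec_symm hA (evec hA i) v,
    show A *ᵥ evec hA i = hA.eigenvalues i • evec hA i from hA.mulVec_eigenvectorBasis i,
    smul_dotProduct, smul_eq_mul]

lemma sum_sq_repr (hA : A.IsHermitian) (x : EuclideanSpace ℝ ι) :
    ∑ i, (hA.eigenvectorBasis.repr x i) ^ 2 = ‖x‖ ^ 2 := by
  have h := hA.eigenvectorBasis.repr.norm_map x
  rw [← h, EuclideanSpace.norm_eq, Real.sq_sqrt (Finset.sum_nonneg fun i _ => sq_nonneg _)]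
  refine Finset.sum_congr rfl fun i _ => ?_
  rw [Real.norm_eq_abs, sq_abs]

lemma normsq_eV (hA : A.IsHermitian) (v : ι → ℝ) :
    ∑ i, (hA.eigenvectorBasis.repr (eV v) i) ^ 2 = ∑ i, v i ^ 2 := by
  rw [sum_sq_repr hA, ← norm2_eq, norm2_sq]

lemma ray_eq (hA : A.IsHermitian) (v : ι → ℝ) :
    v ⬝ᵥ (A *ᵥ v) = ∑ i, hA.eigenvalues i * (hA.eigenvectorBasis.repr (eV v) i) ^ 2 := by
  calc v ⬝ᵥ (A *ᵥ v) = (inner ℝ (eV v) (eV (A *ᵥ v)) : ℝ) := (inner_eV _ _).symm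
    _ = (inner ℝ (hA.eigenvectorBasis.repr (eV v)) (hA.eigenvectorBasis.repr (eV (A *ᵥ v))) : ℝ) :=
        (hA.eigenvectorBasis.repr.inner_map_map _ _).symm
    _ = ∑ i, hA.eigenvectorBasis.repr (eV v) i * hA.eigenvectorBasis.repr (eV (A *ᵥ v)) i :=
        innerE _ _
    _ = _ := by refine Finset.sum_congr rfl fun i _ => ?_; rw [repr_mulVec hA]; ring

lemma evec_unit (hA : A.IsHermitian) (i : ι) : ∑ k, (evec hA i) k ^ 2 = 1 := by
  have h : norm2 (evec hA i) = 1 := by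
    rw [norm2_eq, eV_evec hA i, hA.eigenvectorBasis.orthonormal.1 i]
  have := norm2_sq (evec hA i)
  rw [h] at this; simpa using this.symm

lemma ray_evec (hA : A.IsHermitian) (i : ι) : (evec hA i) ⬝ᵥ (A *ᵥ evec hA i) = hA.eigenvalues i := by
  unfold evec
  rw [show A *ᵥ (WithLp.equiv 2 (ι → ℝ)) (hA.eigenvectorBasis i) = hA.eigenvalues i • (WithLp.equiv 2 (ι → ℝ)) (hA.eigenvectorBasis i) from hA.mulVec_eigenvectorBasis i, dotProduct_smul, smul_eq_mul]
  have : (WithLp.equiv 2 (ι → ℝ)) (hA.eigenvectorBasis i) ⬝ᵥ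
      (WithLp.equiv 2 (ι → ℝ)) (hA.eigenvectorBasis i) = ∑ k, (evec hA i) k ^ 2 := by
    unfold dotProduct evec; refine Finset.sum_congr rfl fun k _ => (sq _).symm
  rw [this, evec_unit hA, mul_one]


end spectral

section bounds
variable [Nonempty ι] {A : Matrix ι ι ℝ}

instance sphere_nonempty : Nonempty {v : ι → ℝ // ∑ i, v i ^ 2 = 1} := by
  obtain ⟨a⟩ := (inferInstance : Nonempty ι)
  refine ⟨⟨fun i => if i = a then 1 else 0, ?_⟩⟩
  have h : ∀ i : ι, (if i = a then (1:ℝ) else 0) ^ 2 = if i = a then 1 else 0 :=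
    fun i => by split <;> norm_num
  rw [Finset.sum_congr rfl fun i _ => h i, Finset.sum_ite_eq']
  simp

def emin (hA : A.IsHermitian) : ℝ := Finset.univ.inf' Finset.univ_nonempty hA.eigenvalues
def emax (hA : A.IsHermitian) : ℝ := Finset.univ.sup' Finset.univ_nonempty hA.eigenvalues

lemma ray_ge_emin (hA : A.IsHermitian) (v : ι → ℝ) (hv : ∑ i, v i ^ 2 = 1) :
    emin hA ≤ v ⬝ᵥ (A *ᵥ v) := by
  rw [ray_eq hA]
  have h1 : ∑ i, emin hA * (hA.eigenvectorBasis.repr (eV v) i) ^ 2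
      ≤ ∑ i, hA.eigenvalues i * (hA.eigenvectorBasis.repr (eV v) i) ^ 2 :=
    Finset.sum_le_sum fun i _ =>
      mul_le_mul_of_nonneg_right (Finset.inf'_le _ (Finset.mem_univ i)) (sq_nonneg _)
  calc emin hA = emin hA * ∑ i, (hA.eigenvectorBasis.repr (eV v) i) ^ 2 := by
        rw [normsq_eV hA, hv, mul_one]
    _ = ∑ i, emin hA * (hA.eigenvectorBasis.repr (eV v) i) ^ 2 := by rw [Finset.mul_sum]
    _ ≤ _ := h1

lemma ray_le_emax (hA : A.IsHermitian) (v : ι → ℝ) (hv : ∑ i, v i ^ 2 = 1) :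
    v ⬝ᵥ (A *ᵥ v) ≤ emax hA := by
  rw [ray_eq hA]
  have h1 : ∑ i, hA.eigenvalues i * (hA.eigenvectorBasis.repr (eV v) i) ^ 2
      ≤ ∑ i, emax hA * (hA.eigenvectorBasis.repr (eV v) i) ^ 2 :=
    Finset.sum_le_sum fun i _ =>
      mul_le_mul_of_nonneg_right (Finset.le_sup' _ (Finset.mem_univ i)) (sq_nonneg _)
  calc ∑ i, hA.eigenvalues i * (hA.eigenvectorBasis.repr (eV v) i) ^ 2
      ≤ ∑ i, emax hA * (hA.eigenvectorBasis.repr (eV v) i) ^ 2 := h1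
    _ = emax hA * ∑ i, (hA.eigenvectorBasis.repr (eV v) i) ^ 2 := by rw [Finset.mul_sum]
    _ = emax hA := by rw [normsq_eV hA, hv, mul_one]

lemma bddBelow_ray (hA : A.IsHermitian) :
    BddBelow (Set.range fun v : {v : ι → ℝ // ∑ i, v i ^ 2 = 1} => v.1 ⬝ᵥ (A *ᵥ v.1)) :=
  ⟨emin hA, by rintro x ⟨v, rfl⟩; exact ray_ge_emin hA v.1 v.2⟩

lemma bddAbove_ray (hA : A.IsHermitian) :
    BddAbove (Set.range fun v : {v : ι → ℝ // ∑ i, v i ^ 2 = 1} => v.1 ⬝ᵥ (A *ᵥ v.1)) :=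
  ⟨emax hA, by rintro x ⟨v, rfl⟩; exact ray_le_emax hA v.1 v.2⟩

lemma lamMin_le_ray (hA : A.IsHermitian) (v : ι → ℝ) (hv : ∑ i, v i ^ 2 = 1) :
    lamMin A ≤ v ⬝ᵥ (A *ᵥ v) :=
  ciInf_le (bddBelow_ray hA) (⟨v, hv⟩ : {v : ι → ℝ // ∑ i, v i ^ 2 = 1})

lemma ray_le_lamMax (hA : A.IsHermitian) (v : ι → ℝ) (hv : ∑ i, v i ^ 2 = 1) :
    v ⬝ᵥ (A *ᵥ v) ≤ lamMax A :=
  le_ciSup (bddAbove_ray hA) (⟨v, hv⟩ : {v : ι → ℝ // ∑ i, v i ^ 2 = 1})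

lemma emin_le_lamMin (hA : A.IsHermitian) : emin hA ≤ lamMin A :=
  le_ciInf fun v => ray_ge_emin hA v.1 v.2

lemma lamMax_le_emax (hA : A.IsHermitian) : lamMax A ≤ emax hA :=
  ciSup_le fun v => ray_le_emax hA v.1 v.2

lemma lamMin_le_eig (hA : A.IsHermitian) (i : ι) : lamMin A ≤ hA.eigenvalues i := by
  have := lamMin_le_ray hA (evec hA i) (evec_unit hA i)
  rwa [ray_evec hA i] at this

lemma eig_le_lamMax (hA : A.IsHermitian) (i : ι) : hA.eigenvalues i ≤ lamMax A := by
  have := ray_le_lamMax hA (evec hA i) (evec_unit hA i)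
  rwa [ray_evec hA i] at this

lemma lamMin_le_lamMax (hA : A.IsHermitian) : lamMin A ≤ lamMax A :=
  (lamMin_le_eig hA (Classical.arbitrary ι)).trans (eig_le_lamMax hA (Classical.arbitrary ι))

lemma quad_ge (hA : A.IsHermitian) (v : ι → ℝ) :
    lamMin A * ∑ i, v i ^ 2 ≤ v ⬝ᵥ (A *ᵥ v) := by
  rw [ray_eq hA, ← normsq_eV hA, Finset.mul_sum]
  exact Finset.sum_le_sum fun i _ =>
    mul_le_mul_of_nonneg_right (lamMin_le_eig hA i) (sq_nonneg _)

lemma lamMin_pos (hA : A.PosDef) : 0 < lamMin A := by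
  have h1 : 0 < emin hA.1 := by
    rw [emin, Finset.lt_inf'_iff]
    exact fun i _ => hA.eigenvalues_pos i
  exact h1.trans_le (emin_le_lamMin hA.1)

lemma posDef_of_lamMin_pos (hA : A.IsHermitian) (h : 0 < lamMin A) : A.PosDef := by
  refine Matrix.PosDef.of_dotProduct_mulVec_pos hA fun x hx => ?_
  have hs : (0:ℝ) < ∑ i, x i ^ 2 := by
    have : ∃ i, x i ≠ 0 := Function.ne_iff.mp hx
    obtain ⟨i, hi⟩ := this
    exact Finset.sum_pos' (fun j _ => sq_nonneg _) ⟨i, Finset.mem_univ i, by positivity⟩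
  have := quad_ge hA x
  simp only [star_trivial]
  exact lt_of_lt_of_le (by positivity) this

lemma mulVec_norm_ge (hA : A.IsHermitian) (hpos : 0 < lamMin A) (v : ι → ℝ) :
    lamMin A * norm2 v ≤ norm2 (A *ᵥ v) := by
  have hsq : (lamMin A * norm2 v) ^ 2 ≤ norm2 (A *ᵥ v) ^ 2 := by
    rw [mul_pow, norm2_sq, norm2_sq, ← normsq_eV hA v, ← normsq_eV hA (A *ᵥ v), Finset.mul_sum]
    refine Finset.sum_le_sum fun i _ => ?_
    rw [repr_mulVec hA, mul_pow]
    exact mul_le_mul_of_nonneg_right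
      (pow_le_pow_left₀ hpos.le (lamMin_le_eig hA i) 2) (sq_nonneg _)
  have h0 : 0 ≤ lamMin A * norm2 v := mul_nonneg hpos.le (norm2_nonneg v)
  calc lamMin A * norm2 v = Real.sqrt ((lamMin A * norm2 v) ^ 2) := (Real.sqrt_sq h0).symm
    _ ≤ Real.sqrt (norm2 (A *ᵥ v) ^ 2) := Real.sqrt_le_sqrt hsq
    _ = norm2 (A *ᵥ v) := Real.sqrt_sq (norm2_nonneg _)

lemma contraction (hA : A.IsHermitian) {θ ρ : ℝ} (hρ : 0 ≤ ρ)
    (h : ∀ i, |1 - θ * hA.eigenvalues i| ≤ ρ) (v : ι → ℝ) :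
    norm2 (v - θ • (A *ᵥ v)) ≤ ρ * norm2 v := by
  have hsq : norm2 (v - θ • (A *ᵥ v)) ^ 2 ≤ (ρ * norm2 v) ^ 2 := by
    rw [mul_pow, norm2_sq, norm2_sq, ← normsq_eV hA v,
      ← normsq_eV hA (v - θ • (A *ᵥ v)), Finset.mul_sum]
    refine Finset.sum_le_sum fun i _ => ?_
    have hrepr : hA.eigenvectorBasis.repr (eV (v - θ • (A *ᵥ v))) i
        = (1 - θ * hA.eigenvalues i) * hA.eigenvectorBasis.repr (eV v) i := by
      rw [eV_sub, eV_smul, map_sub, _root_.map_smul]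
      simp only [PiLp.sub_apply, PiLp.smul_apply, smul_eq_mul, repr_mulVec hA]
      ring
    rw [hrepr, mul_pow]
    refine mul_le_mul_of_nonneg_right ?_ (sq_nonneg _)
    calc (1 - θ * hA.eigenvalues i) ^ 2 = |1 - θ * hA.eigenvalues i| ^ 2 := (sq_abs _).symm
      _ ≤ ρ ^ 2 := pow_le_pow_left₀ (abs_nonneg _) (h i) 2
  have h0 : 0 ≤ ρ * norm2 v := mul_nonneg hρ (norm2_nonneg v)
  calc norm2 (v - θ • (A *ᵥ v)) = Real.sqrt (norm2 (v - θ • (A *ᵥ v)) ^ 2) :=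
        (Real.sqrt_sq (norm2_nonneg _)).symm
    _ ≤ Real.sqrt ((ρ * norm2 v) ^ 2) := Real.sqrt_le_sqrt hsq
    _ = ρ * norm2 v := Real.sqrt_sq h0

end bounds

section psd
variable {A : Matrix ι ι ℝ}

lemma dot_self_eq (x : ι → ℝ) : x ⬝ᵥ x = ∑ i, x i ^ 2 := by
  unfold dotProduct; exact Finset.sum_congr rfl fun i _ => (sq _).symm

lemma isHermitian_smul_one (c : ℝ) : ((c • 1 : Matrix ι ι ℝ)).IsHermitian := by
  unfold Matrix.IsHermitian
  rw [conjTranspose_smul, conjTranspose_one, star_trivial]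

lemma quad_sub_smul_one (B : Matrix ι ι ℝ) (c : ℝ) (x : ι → ℝ) :
    x ⬝ᵥ ((B - c • 1) *ᵥ x) = x ⬝ᵥ (B *ᵥ x) - c * ∑ i, x i ^ 2 := by
  rw [sub_mulVec, dotProduct_sub, smul_mulVec, one_mulVec, dotProduct_smul,
    smul_eq_mul, dot_self_eq]

lemma psd_sub_smul [Nonempty ι] (hA : A.IsHermitian) :
    (A - lamMin A • 1).PosSemidef := by
  refine Matrix.PosSemidef.of_dotProduct_mulVec_nonneg (hA.sub (isHermitian_smul_one _)) fun x => ?_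
  simp only [star_trivial]
  rw [quad_sub_smul_one, sub_nonneg]
  exact quad_ge hA x

lemma psd_smul {c : ℝ} (hc : 0 ≤ c) (hA : A.PosSemidef) : (c • A).PosSemidef := by
  refine Matrix.PosSemidef.of_dotProduct_mulVec_nonneg ?_ fun x => ?_
  · unfold Matrix.IsHermitian
    rw [conjTranspose_smul, star_trivial, hA.1.eq]
  · rw [smul_mulVec, dotProduct_smul, smul_eq_mul]
    exact mul_nonneg hc (by simpa using hA.dotProduct_mulVec_nonneg x)

lemma psd_kron {κ' : Type*} [Fintype κ'] [DecidableEq κ'] {B : Matrix κ' κ' ℝ}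
    (hA : A.PosSemidef) (hB : B.PosSemidef) : (A ⊗ₖ B).PosSemidef := by
  exact hA.kronecker hB

lemma kron_identity {κ' : Type*} [Fintype κ'] [DecidableEq κ']
    (B : Matrix κ' κ' ℝ) (a c : ℝ) :
    A ⊗ₖ B - (a * c) • (1 : Matrix (ι × κ') (ι × κ') ℝ)
      = (A - a • 1) ⊗ₖ B + a • ((1 : Matrix ι ι ℝ) ⊗ₖ (B - c • (1 : Matrix κ' κ' ℝ))) := by
  ext ⟨i, j⟩ ⟨k, l⟩
  simp only [Matrix.sub_apply, Matrix.add_apply, Matrix.smul_apply, kroneckerMap_apply,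
    Matrix.one_apply, smul_eq_mul, Prod.mk.injEq]
  by_cases hik : i = k <;> by_cases hjl : j = l <;>
    simp [hik, hjl] <;> ring

lemma lamMin_kron_ge {κ' : Type*} [Fintype κ'] [DecidableEq κ'] [Nonempty ι] [Nonempty κ']
    {B : Matrix κ' κ' ℝ} (hA : A.PosDef) (hB : B.PosDef) :
    lamMin A * lamMin B ≤ lamMin (A ⊗ₖ B) := by
  have hpsd : (A ⊗ₖ B - (lamMin A * lamMin B) • 1).PosSemidef := by
    rw [kron_identity B (lamMin A) (lamMin B)]
    exact (psd_kron (psd_sub_smul hA.1) hB.posSemidef).add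
      (psd_smul (lamMin_pos hA).le (psd_kron (Matrix.PosSemidef.one) (psd_sub_smul hB.1)))
  refine le_ciInf fun v => ?_
  have h := hpsd.dotProduct_mulVec_nonneg v.1
  simp only [star_trivial] at h
  rw [quad_sub_smul_one, sub_nonneg, v.2, mul_one] at h
  exact h

lemma posDef_submatrix {κ' : Type*} [Fintype κ'] [DecidableEq κ']
    (hA : A.PosDef) (f : κ' → ι) (hf : Function.Injective f) :
    (A.submatrix f f).PosDef := by
  refine Matrix.PosDef.of_dotProduct_mulVec_pos ?_ fun x hx => ?_
  · unfold Matrix.IsHermitian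
    rw [conjTranspose_submatrix, hA.1.eq]
  · set y : ι → ℝ := fun j => ∑ i, if f i = j then x i else 0 with hy
    have hyf : ∀ i, y (f i) = x i := by
      intro i
      rw [hy]
      simp only
      rw [Finset.sum_eq_single i (fun k _ hk => if_neg (fun hc => hk (hf hc)))
        (fun hk => absurd (Finset.mem_univ i) hk)]
      exact if_pos rfl
    have hAy : ∀ j, (A *ᵥ y) j = ∑ i, A j (f i) * x i := by
      intro j
      calc (A *ᵥ y) j = ∑ k, A j k * y k := rfl
        _ = ∑ k, ∑ i, (if f i = k then A j k * x i else 0) := by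
            refine Finset.sum_congr rfl fun k _ => ?_
            rw [hy]
            simp only
            rw [Finset.mul_sum]
            exact Finset.sum_congr rfl fun i _ => by split <;> simp
        _ = ∑ i, ∑ k, (if f i = k then A j k * x i else 0) := Finset.sum_comm
        _ = ∑ i, A j (f i) * x i := by
            refine Finset.sum_congr rfl fun i _ => ?_
            rw [Finset.sum_ite_eq]
            simp
    have hq : y ⬝ᵥ (A *ᵥ y) = x ⬝ᵥ ((A.submatrix f f) *ᵥ x) := by
      calc y ⬝ᵥ (A *ᵥ y) = ∑ j, y j * (A *ᵥ y) j := rfl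
        _ = ∑ j, ∑ i, (if f i = j then x i * (A *ᵥ y) j else 0) := by
            refine Finset.sum_congr rfl fun j _ => ?_
            rw [hy]
            simp only
            rw [Finset.sum_mul]
            exact Finset.sum_congr rfl fun i _ => by split <;> simp
        _ = ∑ i, ∑ j, (if f i = j then x i * (A *ᵥ y) j else 0) := Finset.sum_comm
        _ = ∑ i, x i * (A *ᵥ y) (f i) := by
            refine Finset.sum_congr rfl fun i _ => ?_
            rw [Finset.sum_ite_eq]
            simp
        _ = ∑ i, x i * ∑ i', A (f i) (f i') * x i' := by
            refine Finset.sum_congr rfl fun i _ => ?_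
            rw [hAy]
        _ = x ⬝ᵥ ((A.submatrix f f) *ᵥ x) := rfl
    have hyne : y ≠ 0 := by
      obtain ⟨i, hi⟩ := Function.ne_iff.mp hx
      intro hc
      exact hi (by rw [← hyf i, hc]; rfl)
    have := hA.dotProduct_mulVec_pos hyne
    simp only [star_trivial] at this ⊢
    rwa [hq] at this

lemma isHermitian_kron {κ' : Type*} [Fintype κ'] [DecidableEq κ'] {B : Matrix κ' κ' ℝ}
    (hA : A.IsHermitian) (hB : B.IsHermitian) : (A ⊗ₖ B).IsHermitian := by
  unfold Matrix.IsHermitian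
  rw [conjTranspose_eq_transpose_of_trivial, ← kroneckerMap_transpose]
  have h1 : Aᵀ = A := by rw [← conjTranspose_eq_transpose_of_trivial]; exact hA.eq
  have h2 : Bᵀ = B := by rw [← conjTranspose_eq_transpose_of_trivial]; exact hB.eq
  rw [h1, h2]

lemma eV_add' (x y : ι → ℝ) : eV (x + y) = eV x + eV y := rfl

lemma norm2_add_le (x y : ι → ℝ) : norm2 (x + y) ≤ norm2 x + norm2 y := by
  rw [norm2_eq, norm2_eq, norm2_eq, eV_add']
  exact norm_add_le _ _

end psd
end GD

/-- perturbed gradient descent for `L(u) = (1/2)uᵀΣ_obs u − uᵀb` with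
step size `θ = 2/(λ_min(Σ_obs) + λ_max(Σ_obs))` and per-step errors `ξ₀^(j)` of norm
at most `ε₀`: after `K ≥ ((κ(Σ_obs)+1)/2)·log(‖b‖₂/(λ_min(Γ_obs)λ_min(Λ)ε₀))`
iterations, `‖u^(K) − Σ_obs⁻¹b‖₂ ≤ ((κ(Σ_obs)+3)/2)·ε₀`. -/
theorem gd_auxiliary_perturbed_convergence
    {H d : ℕ} (hH : 2 ≤ H) (hd : 1 ≤ d)
    (Γ : Matrix (Fin H) (Fin H) ℝ) (Λ : Matrix (Fin d) (Fin d) ℝ)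
    (hΓ : Γ.PosDef) (hΛ : Λ.PosDef)
    (Iobs Imiss : Finset (Fin H)) (hobs : Iobs.Nonempty) (hmiss : Imiss.Nonempty)
    (hdisj : Disjoint Iobs Imiss) (hunion : Iobs ∪ Imiss = Finset.univ)
    (b : {i // i ∈ Iobs} × Fin d → ℝ) (ε₀ : ℝ) (hε₀ : 0 < ε₀) (hε₁ : ε₀ < 1)
    (ξ : ℕ → ({i // i ∈ Iobs} × Fin d → ℝ))
    (u : ℕ → ({i // i ∈ Iobs} × Fin d → ℝ)) :
    let Γobs : Matrix {i // i ∈ Iobs} {i // i ∈ Iobs} ℝ :=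
      Γ.submatrix (fun i => (i : Fin H)) (fun i => (i : Fin H))
    let Sobs : Matrix ({i // i ∈ Iobs} × Fin d) ({i // i ∈ Iobs} × Fin d) ℝ := Γobs ⊗ₖ Λ
    let θ : ℝ := 2 / (lamMin Sobs + lamMax Sobs)
    (∀ j : ℕ, norm2 (ξ j) ≤ ε₀) →
    u 0 = 0 →
    (∀ j : ℕ, u (j + 1) = u j - θ • (Sobs *ᵥ u j - b) + ξ j) →
    ∀ K : ℕ,
      ((kappa Sobs + 1) / 2) * Real.log (norm2 b / (lamMin Γobs * lamMin Λ * ε₀)) ≤ (K : ℝ) →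
      norm2 (u K - Sobs⁻¹ *ᵥ b) ≤ ((kappa Sobs + 3) / 2) * ε₀ := by
  intro Γobs Sobs θ hξ hu0 hrec K hK
  haveI : Nonempty {i // i ∈ Iobs} := ⟨⟨hobs.choose, hobs.choose_spec⟩⟩
  haveI : Nonempty (Fin d) := ⟨⟨0, hd⟩⟩
  have hinj : Function.Injective (fun i : {i // i ∈ Iobs} => (i : Fin H)) :=
    fun a b hab => Subtype.ext hab
  have hΓobs : Γobs.PosDef := GD.posDef_submatrix hΓ _ hinj
  have hSymS : Sobs.IsHermitian := GD.isHermitian_kron hΓobs.1 hΛ.1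
  have hm0Γ : 0 < lamMin Γobs := GD.lamMin_pos hΓobs
  have hm0Λ : 0 < lamMin Λ := GD.lamMin_pos hΛ
  have hkron : lamMin Γobs * lamMin Λ ≤ lamMin Sobs := GD.lamMin_kron_ge hΓobs hΛ
  have hmS : 0 < lamMin Sobs := lt_of_lt_of_le (by positivity) hkron
  have hSpd : Sobs.PosDef := GD.posDef_of_lamMin_pos hSymS hmS
  set m := lamMin Sobs with hm_def
  set M := lamMax Sobs with hM_def
  have hmM : m ≤ M := GD.lamMin_le_lamMax hSymS
  have hMpos : 0 < M := hmS.trans_le hmM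
  have hsum : 0 < m + M := by linarith
  set ρ : ℝ := (M - m) / (m + M) with hρ_def
  have hρ0 : 0 ≤ ρ := div_nonneg (by linarith) (by linarith)
  have hρ1 : ρ < 1 := by rw [hρ_def, div_lt_one hsum]; linarith
  have h1ρ : 1 - ρ = 2 * m / (m + M) := by
    rw [hρ_def]
    field_simp
    ring
  have hθ : θ = 2 / (m + M) := rfl
  have heig : ∀ i, |1 - θ * hSymS.eigenvalues i| ≤ ρ := by
    intro i
    have h1 := GD.lamMin_le_eig hSymS i
    have h2 := GD.eig_le_lamMax hSymS i
    rw [← hm_def] at h1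
    rw [← hM_def] at h2
    have e1 : 1 - θ * hSymS.eigenvalues i = (m + M - 2 * hSymS.eigenvalues i) / (m + M) := by
      rw [hθ]; field_simp
    rw [e1, hρ_def, abs_div, abs_of_pos hsum, div_le_div_iff_of_pos_right hsum, abs_le]
    constructor <;> linarith
  have hcontr : ∀ v, norm2 (v - θ • (Sobs *ᵥ v)) ≤ ρ * norm2 v :=
    GD.contraction hSymS hρ0 heig
  have hdet : IsUnit Sobs.det := isUnit_iff_ne_zero.mpr hSpd.det_pos.ne'
  set w := Sobs⁻¹ *ᵥ b with hw_def
  have hSw : Sobs *ᵥ w = b := by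
    rw [hw_def, mulVec_mulVec, Matrix.mul_nonsing_inv _ hdet, one_mulVec]
  have hwb : m * norm2 w ≤ norm2 b := by
    have := GD.mulVec_norm_ge hSymS hmS w
    rwa [hSw] at this
  have hw : norm2 w ≤ norm2 b / m := by
    rw [le_div_iff₀ hmS]
    nlinarith [GD.norm2_nonneg w]
  set e : ℕ → ({i // i ∈ Iobs} × Fin d → ℝ) := fun j => u j - w with he
  have herec : ∀ j, e (j + 1) = (e j - θ • (Sobs *ᵥ e j)) + ξ j := by
    intro j
    have hsv : Sobs *ᵥ (u j - w) = Sobs *ᵥ u j - b := by rw [Matrix.mulVec_sub, hSw]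
    show u (j+1) - w = ((u j - w) - θ • (Sobs *ᵥ (u j - w))) + ξ j
    rw [hrec j, hsv]
    abel
  have hstep : ∀ j, norm2 (e (j + 1)) ≤ ρ * norm2 (e j) + ε₀ := by
    intro j
    rw [herec j]
    calc norm2 ((e j - θ • (Sobs *ᵥ e j)) + ξ j)
        ≤ norm2 (e j - θ • (Sobs *ᵥ e j)) + norm2 (ξ j) := GD.norm2_add_le _ _
      _ ≤ ρ * norm2 (e j) + ε₀ := add_le_add (hcontr (e j)) (hξ j)
  set S : ℝ := ε₀ / (1 - ρ) with hS_def
  have h1ρpos : 0 < 1 - ρ := by linarith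
  have hS0 : 0 ≤ S := div_nonneg hε₀.le h1ρpos.le
  have hSfix : ρ * S + ε₀ = S := by
    rw [hS_def]; field_simp; ring
  have hgeo : ∀ j, norm2 (e j) ≤ ρ ^ j * norm2 (e 0) + S := by
    intro j
    induction j with
    | zero => simp; linarith [GD.norm2_nonneg (e 0)]
    | succ n ih =>
      calc norm2 (e (n + 1)) ≤ ρ * norm2 (e n) + ε₀ := hstep n
        _ ≤ ρ * (ρ ^ n * norm2 (e 0) + S) + ε₀ :=
            add_le_add_left (mul_le_mul_of_nonneg_left ih hρ0) _
        _ = ρ ^ (n + 1) * norm2 (e 0) + (ρ * S + ε₀) := by ring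
        _ = ρ ^ (n + 1) * norm2 (e 0) + S := by rw [hSfix]
  have he0 : norm2 (e 0) = norm2 w := by
    show norm2 (u 0 - w) = norm2 w
    rw [hu0, zero_sub, GD.norm2_eq, GD.norm2_eq, GD.eV_neg, norm_neg]
  set m₀ : ℝ := lamMin Γobs * lamMin Λ with hm₀_def
  have hm₀pos : 0 < m₀ := by positivity
  have hbm : norm2 b / m ≤ norm2 b / m₀ :=
    div_le_div_of_nonneg_left (GD.norm2_nonneg b) hm₀pos hkron
  have he0b : norm2 (e 0) ≤ norm2 b / m₀ := by
    rw [he0]; exact hw.trans hbm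
  have hSK : S = (kappa Sobs + 1) / 2 * ε₀ := by
    rw [hS_def, h1ρ, kappa, ← hm_def, ← hM_def]
    field_simp
    ring
  have hmain : ρ ^ K * norm2 (e 0) ≤ ε₀ := by
    by_cases hcase : norm2 b / m₀ ≤ ε₀
    · have h1 : ρ ^ K ≤ 1 := pow_le_one₀ hρ0 hρ1.le
      calc ρ ^ K * norm2 (e 0) ≤ 1 * (norm2 b / m₀) :=
            mul_le_mul h1 he0b (GD.norm2_nonneg _) zero_le_one
        _ = norm2 b / m₀ := one_mul _
        _ ≤ ε₀ := hcase
    · push_neg at hcase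
      have hbpos : 0 < norm2 b := by
        have h0 : 0 < norm2 b / m₀ := hε₀.trans hcase
        rcases (GD.norm2_nonneg b).lt_or_eq with h | h
        · exact h
        · exfalso
          rw [← h] at hcase
          simp only [zero_div] at hcase
          linarith
      set R : ℝ := norm2 b / (m₀ * ε₀) with hR_def
      have hRpos : 0 < R := by positivity
      have hfac : ((kappa Sobs + 1) / 2) * (1 - ρ) = 1 := by
        rw [h1ρ, kappa, ← hm_def, ← hM_def]
        field_simp
        ring
      have hKbound : Real.log R ≤ (K : ℝ) * (1 - ρ) := by
        have h := mul_le_mul_of_nonneg_right hK h1ρpos.le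
        calc Real.log R = ((kappa Sobs + 1) / 2) * Real.log R * (1 - ρ) := by
              rw [mul_comm ((kappa Sobs + 1) / 2) (Real.log R), mul_assoc, hfac, mul_one]
          _ ≤ (K : ℝ) * (1 - ρ) := h
      have hρe : ρ ≤ Real.exp (ρ - 1) := by
        have := Real.add_one_le_exp (ρ - 1)
        linarith
      have hρK : ρ ^ K ≤ R⁻¹ := by
        calc ρ ^ K ≤ (Real.exp (ρ - 1)) ^ K := pow_le_pow_left₀ hρ0 hρe K
          _ = Real.exp ((ρ - 1) * K) := by
              rw [← Real.exp_nat_mul, mul_comm]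
          _ ≤ Real.exp (- Real.log R) := by
              rw [Real.exp_le_exp]
              have hexp : (ρ - 1) * K = -((K : ℝ) * (1 - ρ)) := by ring
              rw [hexp]
              linarith
          _ = R⁻¹ := by rw [Real.exp_neg, Real.exp_log hRpos]
      have hfinal : R⁻¹ * (norm2 b / m₀) = ε₀ := by
        rw [hR_def]
        field_simp
      calc ρ ^ K * norm2 (e 0) ≤ R⁻¹ * (norm2 b / m₀) :=
            mul_le_mul hρK he0b (GD.norm2_nonneg _) (inv_nonneg.mpr hRpos.le)
        _ = ε₀ := hfinal
  calc norm2 (u K - Sobs⁻¹ *ᵥ b) = norm2 (e K) := rfl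
    _ ≤ ρ ^ K * norm2 (e 0) + S := hgeo K
    _ ≤ ε₀ + (kappa Sobs + 1) / 2 * ε₀ := by rw [hSK] at *; exact add_le_add_left hmain _
    _ = (kappa Sobs + 3) / 2 * ε₀ := by ring


end
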